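/- Let q be a prime and a an integer with a ≡ 1 (mod q^2), a ≠ 1. Fix k ≥ 1, a digit b ∈ {0,…,q−1}, and a word (a_0,…,a_{k−1}) ∈ ({0,…,q−1} \ {b})^k. Let S = {0 ≤ n ≤ q^k − 1 : a^n mod q^k has base-q digits a_0,…,a_{k−1}}. Then #S ≤ q^{c}, where c = v_q(log_q(a)) depends only on a and q; in particular #S is bounded independently of k. -/

import Mathlib

open Finset Filter Topology IsUltrametricDist

private lemma nat_digits_ext (q : ℕ) (hq : 2 ≤ q) :
    ∀ k : ℕ, ∀ x y : ℕ, x < q ^ k → y < q ^ k →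
      (∀ j, j < k → x / q ^ j % q = y / q ^ j % q) → x = y := by
  intro k
  induction k with
  | zero => intro x y hx hy _; simp at hx hy; omega
  | succ k ih =>
    intro x y hx hy h
    have h0 : x % q = y % q := by simpa using h 0 (Nat.succ_pos k)
    have hxq : x / q < q ^ k := by
      rw [Nat.div_lt_iff_lt_mul (by omega)]
      calc x < q ^ (k + 1) := hx
      _ = q ^ k * q := by rw [pow_succ]
    have hyq : y / q < q ^ k := by
      rw [Nat.div_lt_iff_lt_mul (by omega)]
      calc y < q ^ (k + 1) := hy
      _ = q ^ k * q := by rw [pow_succ]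
    have := ih (x / q) (y / q) hxq hyq (fun j hj => by
      have := h (j + 1) (by omega)
      rw [Nat.div_div_eq_div_mul, Nat.div_div_eq_div_mul]
      rwa [pow_succ'] at this)
    have hx' := Nat.div_add_mod x q
    have hy' := Nat.div_add_mod y q
    rw [this, h0] at hx'
    omega

private lemma a_ne_pm (q : ℕ) (hq : q.Prime) (a : ℤ) (ha1 : (q : ℤ) ^ 2 ∣ a - 1)
    (ha2 : a ≠ 1) (d : ℕ) (hd : d ≠ 0) : a ^ d - 1 ≠ 0 := by
  have hq2 : (2 : ℤ) ≤ (q : ℤ) := by exact_mod_cast hq.two_le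
  intro h
  have had : a ^ d = 1 := by omega
  have : a = 1 ∨ a = -1 := by
    have h1 : a ∣ 1 := had ▸ dvd_pow_self a hd
    exact Int.isUnit_iff.mp (isUnit_of_dvd_one h1)
  rcases this with h1 | h1
  · exact ha2 h1
  · subst h1
    have h2 : (q:ℤ)^2 ∣ 2 := by
      rw [show (-1:ℤ) - 1 = -2 by ring] at ha1
      exact (dvd_neg).mp ha1
    have := Int.le_of_dvd (by norm_num) h2
    nlinarith

private lemma lte_key (q : ℕ) (hq : q.Prime) (a : ℤ) (ha1 : (q : ℤ) ^ 2 ∣ a - 1)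
    (ha2 : a ≠ 1) (d : ℕ) (hd : d ≠ 0) :
    padicValInt q (a ^ d - 1) = padicValInt q (a - 1) + padicValNat q d := by
  haveI : Fact q.Prime := ⟨hq⟩
  have hqd : (q : ℤ) ∣ a - 1 := dvd_trans (dvd_pow_self _ two_ne_zero) ha1
  have hqa : ¬ (q : ℤ) ∣ a := by
    intro h
    have : (q : ℤ) ∣ 1 := by
      have := dvd_sub h hqd
      simpa using this
    have := Int.le_of_dvd one_pos this
    have := hq.two_le
    exact_mod_cast by omega
  have hne : a - 1 ≠ 0 := sub_ne_zero.mpr ha2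
  have hned : a ^ d - 1 ≠ 0 := a_ne_pm q hq a ha1 ha2 d hd
  -- emultiplicity statement
  have hem : emultiplicity (q : ℤ) (a ^ d - 1) =
      emultiplicity (q : ℤ) (a - 1) + emultiplicity q d := by
    rcases hq.eq_two_or_odd' with h2 | hodd
    · subst h2
      have h4 : (4 : ℤ) ∣ a - 1 := by
        have : ((2:ℕ) : ℤ) ^ 2 = 4 := by norm_num
        rwa [this] at ha1
      have := Int.two_pow_sub_pow' d h4 (by exact_mod_cast hqa)
      simp only [one_pow] at this
      rw [← Int.natCast_emultiplicity 2 d]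
      push_cast
      exact this
    · have := Int.emultiplicity_pow_sub_pow hq hodd
        (by simpa using hqd) hqa d
      simpa using this
  -- convert to padicValInt
  have conv : ∀ z : ℤ, z ≠ 0 → emultiplicity (q : ℤ) z = (padicValInt q z : ℕ∞) := by
    intro z hz
    rw [← Int.emultiplicity_natAbs, padicValInt,
      padicValNat_eq_emultiplicity (Int.natAbs_ne_zero.mpr hz)]
  have hdfin : emultiplicity q d = (padicValNat q d : ℕ∞) :=
    (padicValNat_eq_emultiplicity hd).symm
  rw [conv _ hned, conv _ hne, hdfin] at hem
  exact_mod_cast hem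

theorem digit_word_fiber_bounded
    (q : ℕ) (hq : q.Prime) [Fact q.Prime]
    (a : ℤ) (ha1 : (q : ℤ) ^ 2 ∣ a - 1) (ha2 : a ≠ 1)
    (k : ℕ) (hk : 1 ≤ k) (b : ℕ) (hb : b < q)
    (w : Fin k → ℕ) (hw : ∀ j, w j < q ∧ w j ≠ b) :
    ∃ (L : ℚ_[q]) (c : ℕ),
      HasSum (fun i : ℕ => (-1) ^ i * ((a : ℚ_[q]) - 1) ^ (i + 1) / ((i : ℚ_[q]) + 1)) L ∧
      ‖L‖ = (q : ℝ) ^ (-(c : ℤ)) ∧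
      ((Finset.range (q ^ k)).filter
          (fun n => ∀ j : Fin k,
            (a ^ n % (q : ℤ) ^ k).toNat / q ^ (j : ℕ) % q = w j)).card ≤ q ^ c := by
  have hq1 : 1 < q := hq.one_lt
  have hqR1 : (1 : ℝ) < (q : ℝ) := by exact_mod_cast hq1
  have hqR0 : (0 : ℝ) < (q : ℝ) := by positivity
  have hne : a - 1 ≠ 0 := sub_ne_zero.mpr ha2
  set c : ℕ := padicValInt q (a - 1) with hcdef
  have hc2 : 2 ≤ c := by
    rcases (padicValInt_dvd_iff 2 (a - 1)).mp ha1 with h | h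
    · exact absurd h hne
    · exact h
  set x : ℚ_[q] := (a : ℚ_[q]) - 1 with hxdef
  have hxcast : x = ((a - 1 : ℤ) : ℚ_[q]) := by push_cast [hxdef]; ring
  have hx0 : x ≠ 0 := by
    rw [hxcast]
    exact_mod_cast (Int.cast_ne_zero (α := ℚ_[q])).mpr hne
  have hxnorm : ‖x‖ = (q : ℝ) ^ (-(c : ℤ)) := by
    rw [Padic.norm_eq_zpow_neg_valuation hx0, hxcast, Padic.valuation_intCast]
  set f : ℕ → ℚ_[q] := fun i : ℕ => (-1) ^ i * x ^ (i + 1) / ((i : ℚ_[q]) + 1) with hfdef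
  -- norm of each term
  have hval_le : ∀ i : ℕ, padicValNat q (i + 1) ≤ i := by
    intro i
    have h1 : q ^ padicValNat q (i + 1) ≤ i + 1 :=
      Nat.le_of_dvd (Nat.succ_pos i) pow_padicValNat_dvd
    have h2 : i + 1 ≤ q ^ i :=
      le_trans (Nat.lt_two_pow_self (n := i)) (Nat.pow_le_pow_left hq1 i)
    exact (Nat.pow_le_pow_iff_right hq1).mp (le_trans h1 h2)
  have hbound : ∀ i : ℕ, ‖f i‖ ≤ (q : ℝ) ^ (-(c : ℤ) - i) := by
    intro i
    have hi0 : ((i : ℚ_[q]) + 1) ≠ 0 := by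
      have : (((i + 1 : ℕ) : ℚ_[q])) ≠ 0 := by
        exact_mod_cast (Nat.cast_ne_zero (R := ℚ_[q])).mpr (Nat.succ_ne_zero i)
      push_cast at this
      exact this
    have hnormden : ‖(i : ℚ_[q]) + 1‖ = (q : ℝ) ^ (-(padicValNat q (i + 1) : ℤ)) := by
      have h1 : ((i : ℚ_[q]) + 1) = (((i + 1 : ℕ) : ℚ_[q])) := by push_cast; ring
      rw [h1, Padic.norm_eq_zpow_neg_valuation (by rwa [← h1]), Padic.valuation_natCast]
    have : ‖f i‖ = (q : ℝ) ^ (-(c : ℤ) * (i + 1) + (padicValNat q (i + 1) : ℤ)) := by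
      rw [hfdef]
      simp only [norm_div, norm_mul, norm_pow, norm_neg, norm_one, one_pow, one_mul]
      rw [hxnorm, hnormden, ← zpow_natCast ((q : ℝ) ^ (-(c : ℤ))) (i + 1), ← zpow_mul,
        ← zpow_sub₀ (ne_of_gt hqR0)]
      congr 1
      push_cast
      ring
    rw [this]
    apply zpow_le_zpow_right₀ (le_of_lt hqR1)
    have hv := hval_le i
    have hv' : (padicValNat q (i + 1) : ℤ) ≤ (i : ℤ) := by exact_mod_cast hv
    have hc' : (2 : ℤ) ≤ (c : ℤ) := by exact_mod_cast hc2
    nlinarith [Int.natCast_nonneg i]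
  -- summability
  have hsum : Summable f := by
    apply NonarchimedeanAddGroup.summable_of_tendsto_cofinite_zero
    rw [Nat.cofinite_eq_atTop]
    rw [tendsto_zero_iff_norm_tendsto_zero]
    apply squeeze_zero (fun i => norm_nonneg _) hbound
    have hgeom : Tendsto (fun i : ℕ => (q : ℝ) ^ (-(c : ℤ)) * ((q : ℝ)⁻¹) ^ i) atTop (𝓝 0) := by
      have := (tendsto_pow_atTop_nhds_zero_of_lt_one
        (le_of_lt (inv_pos.mpr hqR0)) (inv_lt_one_of_one_lt₀ hqR1)).const_mul
        ((q : ℝ) ^ (-(c : ℤ)))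
      simpa using this
    convert hgeom using 2 with i
    rw [sub_eq_add_neg, zpow_add₀ (ne_of_gt hqR0)]
    congr 1
    rw [zpow_neg, zpow_natCast, inv_pow]
  set L : ℚ_[q] := ∑' i, f i with hLdef
  have hL : HasSum f L := hsum.hasSum
  -- norm of L
  have hf0 : f 0 = x := by simp [hfdef]
  have hrest : HasSum (fun n => f (n + 1)) (L - f 0) := by
    have := (hasSum_nat_add_iff' (f := f) 1).mpr hL
    simpa using this
  have hTnorm : ‖L - f 0‖ ≤ (q : ℝ) ^ (-(c : ℤ) - 1) := by
    rw [← hrest.tsum_eq]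
    apply IsUltrametricDist.norm_tsum_le_of_forall_le_of_nonneg (by positivity)
    intro i
    refine (hbound (i + 1)).trans (zpow_le_zpow_right₀ (le_of_lt hqR1) ?_)
    push_cast
    omega
  have hlt : ‖L - f 0‖ < ‖f 0‖ := by
    calc ‖L - f 0‖ ≤ (q : ℝ) ^ (-(c : ℤ) - 1) := hTnorm
    _ < (q : ℝ) ^ (-(c : ℤ)) := zpow_lt_zpow_right₀ hqR1 (show -(c:ℤ)-1 < -(c:ℤ) by omega)
    _ = ‖f 0‖ := by rw [hf0, hxnorm]
  have hLnorm : ‖L‖ = (q : ℝ) ^ (-(c : ℤ)) := by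
    have heq : L = f 0 + (L - f 0) := by ring
    rw [heq, norm_add_eq_max_of_norm_ne_norm (ne_of_gt hlt),
      max_eq_left (le_of_lt hlt), hf0, hxnorm]
  refine ⟨L, c, hL, hLnorm, ?_⟩
  -- combinatorial part
  have hqa : ¬ (q : ℤ) ∣ a := by
    intro h
    have hqd : (q : ℤ) ∣ a - 1 := dvd_trans (dvd_pow_self _ two_ne_zero) ha1
    have h1 : (q : ℤ) ∣ 1 := by
      have := dvd_sub h hqd
      simpa using this
    have := Int.le_of_dvd one_pos h1
    have := hq.two_le
    exact_mod_cast by omega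
  set Q : ℤ := (q : ℤ) ^ k with hQdef
  have hQpos : (0 : ℤ) < Q := by positivity
  have hQcast : Q = ((q ^ k : ℕ) : ℤ) := by push_cast [hQdef]; ring
  set S := (Finset.range (q ^ k)).filter
      (fun n => ∀ j : Fin k,
        (a ^ n % (q : ℤ) ^ k).toNat / q ^ (j : ℕ) % q = w j) with hSdef
  -- all elements of S have the same residue of a ^ n mod Q
  have hsame : ∀ n ∈ S, ∀ m ∈ S, a ^ n % Q = a ^ m % Q := by
    intro n hn m hm
    rw [hSdef, Finset.mem_filter] at hn hm
    have h1 : ∀ r : ℕ, 0 ≤ a ^ r % Q := fun r => Int.emod_nonneg _ (ne_of_gt hQpos)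
    have h2 : ∀ r : ℕ, (a ^ r % Q).toNat < q ^ k := by
      intro r
      have hlt := Int.emod_lt_of_pos (a ^ r) hQpos
      have h0 := h1 r
      omega
    have hdig : (a ^ n % Q).toNat = (a ^ m % Q).toNat := by
      refine nat_digits_ext q hq.two_le k _ _ (h2 n) (h2 m) (fun j hj => ?_)
      have e1 := hn.2 ⟨j, hj⟩
      have e2 := hm.2 ⟨j, hj⟩
      simp only at e1 e2
      rw [← hQdef] at e1 e2
      rw [e1, e2]
    have := h1 n
    have := h1 m
    omega
  -- divisibility of differences
  have hdvd : ∀ n m : ℕ, m ≤ n → a ^ n % Q = a ^ m % Q → q ^ (k - c) ∣ n - m := by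
    intro n m hmn hnm
    by_cases heq : n = m
    · subst heq; simp
    have hd0 : n - m ≠ 0 := by omega
    have h1 : Q ∣ a ^ n - a ^ m :=
      Int.dvd_of_emod_eq_zero (Int.emod_eq_emod_iff_emod_sub_eq_zero.mp hnm)
    have hcop : IsCoprime Q (a ^ m) :=
      (((Int.prime_iff_natAbs_prime.mpr (by simpa using hq)).coprime_iff_not_dvd).mpr hqa).pow
    have h2 : a ^ n - a ^ m = a ^ m * (a ^ (n - m) - 1) := by
      rw [mul_sub, mul_one, ← pow_add]
      congr 2
      omega
    have h3 : Q ∣ a ^ (n - m) - 1 := hcop.dvd_of_dvd_mul_left (h2 ▸ h1)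
    have hval := lte_key q hq a ha1 ha2 (n - m) hd0
    rw [← hcdef] at hval
    have h4 : k ≤ padicValInt q (a ^ (n - m) - 1) := by
      rcases (padicValInt_dvd_iff k _).mp (hQdef ▸ h3) with h | h
      · exact absurd h (a_ne_pm q hq a ha1 ha2 _ hd0)
      · exact h
    have h5 : k - c ≤ padicValNat q (n - m) := by omega
    calc q ^ (k - c) ∣ q ^ padicValNat q (n - m) := pow_dvd_pow q h5
    _ ∣ n - m := pow_padicValNat_dvd
  by_cases hkc : k ≤ c
  · calc S.card ≤ (Finset.range (q ^ k)).card := Finset.card_filter_le _ _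
    _ = q ^ k := Finset.card_range _
    _ ≤ q ^ c := Nat.pow_le_pow_right hq.pos hkc
  · push_neg at hkc
    have hQd : 0 < q ^ (k - c) := pow_pos hq.pos _
    have hinj := Finset.card_le_card_of_injOn (s := S) (t := Finset.range (q ^ c))
      (fun n => n / q ^ (k - c)) ?_ ?_
    · simpa using hinj
    · intro n hn
      rw [Finset.mem_coe, Finset.mem_range]
      have hn' : n < q ^ k := Finset.mem_range.mp (Finset.mem_filter.mp hn).1
      rw [Nat.div_lt_iff_lt_mul hQd]
      calc n < q ^ k := hn'
      _ = q ^ c * q ^ (k - c) := by rw [← pow_add]; congr 1; omega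
    · intro n hn m hm hnm
      simp only [Finset.mem_coe] at hn hm
      have key : ∀ n' m' : ℕ, m' ≤ n' → n' ∈ S → m' ∈ S →
          n' / q ^ (k - c) = m' / q ^ (k - c) → n' = m' := by
        intro n' m' hle hn' hm' heq2
        obtain ⟨t, ht⟩ := hdvd n' m' hle (hsame _ hn' _ hm')
        have hnt : n' = m' + q ^ (k - c) * t := by omega
        subst hnt
        rw [Nat.add_mul_div_left _ _ hQd] at heq2
        have ht0 : t = 0 := by omega
        subst ht0
        simp
      rcases le_total m n with h | h
      · exact key n m h hn hm hnm
      · exact (key m n h hm hn hnm.symm).symm
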